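/- Let Q₁, …, Qₙ be probability measures on a measurable space (Ω, A). Let Q₀ = Σ_k λ_k Q_k be a convex combination with each λ_k > 0, and let f_k be an A-measurable version of dQ_k/dQ₀. Let Q be another probability measure dominating each Q_k, and let g_k be an A-measurable version of dQ_k/dQ. Let N = {N ∈ A : Q₀[N] = 0}, let F be the σ-algebra generated by f₁, …, fₙ and G the σ-algebra generated by g₁, …, gₙ. Then F ⊂ σ(G, N), the σ-algebra generated by G together with N. -/

import Mathlib

open MeasureTheory ENNReal MeasurableSpace

lemma comap_le_of_ae_eq {Ω : Type*} [mA : MeasurableSpace Ω] (μ : Measure Ω)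
    (m : MeasurableSpace Ω) (hm : m ≤ mA) {φ ψ : Ω → ℝ≥0∞}
    (hφ : Measurable[mA] φ) (hψ : Measurable[m] ψ) (hae : φ =ᵐ[μ] ψ) :
    MeasurableSpace.comap φ ENNReal.measurableSpace ≤
      m ⊔ MeasurableSpace.generateFrom {N : Set Ω | MeasurableSet[mA] N ∧ μ N = 0} := by
  have hD0 : μ {x | φ x ≠ ψ x} = 0 := ae_iff.mp hae
  obtain ⟨D, hsub, hDmeas, hDnull⟩ :
      ∃ D : Set Ω, {x | φ x ≠ ψ x} ⊆ D ∧ MeasurableSet[mA] D ∧ μ D = 0 := by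
    refine ⟨@toMeasurable Ω mA μ {x | φ x ≠ ψ x}, @subset_toMeasurable Ω mA μ _,
      @measurableSet_toMeasurable Ω mA μ _, ?_⟩
    rw [@measure_toMeasurable Ω mA μ]; exact hD0
  have hle2 : MeasurableSpace.generateFrom {N : Set Ω | MeasurableSet[mA] N ∧ μ N = 0} ≤
      m ⊔ MeasurableSpace.generateFrom {N : Set Ω | MeasurableSet[mA] N ∧ μ N = 0} :=
    le_sup_right
  have hle1 : m ≤ m ⊔ MeasurableSpace.generateFrom
      {N : Set Ω | MeasurableSet[mA] N ∧ μ N = 0} := le_sup_left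
  have hDM : MeasurableSet[m ⊔ MeasurableSpace.generateFrom
      {N : Set Ω | MeasurableSet[mA] N ∧ μ N = 0}] D :=
    hle2 _ (measurableSet_generateFrom ⟨hDmeas, hDnull⟩)
  rintro _ ⟨s, hs, rfl⟩
  have hdecomp : φ ⁻¹' s = (ψ ⁻¹' s \ D) ∪ (φ ⁻¹' s ∩ D) := by
    ext x
    by_cases hx : x ∈ D
    · simp [hx]
    · have hxeq : φ x = ψ x := not_not.mp (fun hne => hx (hsub hne))
      simp [hx, Set.mem_preimage, hxeq]
  rw [hdecomp]
  refine MeasurableSet.union ?_ ?_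
  · exact MeasurableSet.diff (hle1 _ (hψ hs)) hDM
  · refine hle2 _ (measurableSet_generateFrom ⟨(hφ hs).inter hDmeas, ?_⟩)
    exact measure_mono_null Set.inter_subset_right hDnull

theorem stmt_9 {Ω : Type*} [mA : MeasurableSpace Ω] (n : ℕ)
    (Q : Fin n → Measure Ω) (hQprob : ∀ k, IsProbabilityMeasure (Q k))
    (l : Fin n → ℝ≥0∞) (hlpos : ∀ k, 0 < l k) (hlsum : ∑ k, l k = 1)
    (Q0 : Measure Ω) (hQ0 : Q0 = ∑ k, l k • Q k)
    (f : Fin n → Ω → ℝ≥0∞) (hfmeas : ∀ k, Measurable (f k))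
    (hf : ∀ k, Q0.withDensity (f k) = Q k)
    (Q' : Measure Ω) (hQ'prob : IsProbabilityMeasure Q') (hdom : ∀ k, Q k ≪ Q')
    (g : Fin n → Ω → ℝ≥0∞) (hgmeas : ∀ k, Measurable (g k))
    (hg : ∀ k, Q'.withDensity (g k) = Q k) :
    (⨆ k, MeasurableSpace.comap (f k) ENNReal.measurableSpace) ≤
      (⨆ k, MeasurableSpace.comap (g k) ENNReal.measurableSpace) ⊔
        MeasurableSpace.generateFrom {N : Set Ω | MeasurableSet N ∧ Q0 N = 0} := by
  have hGle : (⨆ k, MeasurableSpace.comap (g k) ENNReal.measurableSpace) ≤ mA :=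
    iSup_le fun k => (hgmeas k).comap_le
  have hgG : ∀ k, Measurable[⨆ k, MeasurableSpace.comap (g k) ENNReal.measurableSpace] (g k) :=
    fun k => Measurable.of_comap_le
      (le_iSup (fun k => MeasurableSpace.comap (g k) ENNReal.measurableSpace) k)
  set h : Ω → ℝ≥0∞ := fun x => ∑ k, l k * g k x with hh
  have hhmeas : Measurable[mA] h := Finset.measurable_sum _ fun k _ => (hgmeas k).const_mul _
  have hhG : Measurable[⨆ k, MeasurableSpace.comap (g k) ENNReal.measurableSpace] h :=
    Finset.measurable_sum _ fun k _ => (hgG k).const_mul _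
  have hQ0h : Q0 = Q'.withDensity h := by
    refine Measure.ext fun s hs => ?_
    rw [withDensity_apply _ hs, hQ0]
    simp only [Measure.coe_finset_sum, Finset.sum_apply, Measure.smul_apply, smul_eq_mul]
    rw [hh]
    rw [lintegral_finset_sum _ fun k _ => (hgmeas k).const_mul _]
    refine Finset.sum_congr rfl fun k _ => ?_
    rw [← hg k, withDensity_apply _ hs, ← lintegral_const_mul _ (hgmeas k)]
  have key : ∀ k, (fun x => h x * f k x) =ᵐ[Q'] g k := by
    intro k
    have h1 : Q'.withDensity (fun x => h x * f k x) = Q'.withDensity (g k) := by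
      rw [hg k, ← hf k, hQ0h, ← withDensity_mul _ hhmeas (hfmeas k)]; rfl
    exact (withDensity_eq_iff_of_sigmaFinite (hhmeas.mul (hfmeas k)).aemeasurable
      (hgmeas k).aemeasurable).mp h1
  have hfin : ∀ᵐ x ∂Q', h x ≠ ∞ := by
    have hint : ∫⁻ x, h x ∂Q' ≠ ∞ := by
      rw [hh, lintegral_finset_sum _ fun k _ => (hgmeas k).const_mul _]
      have heach : ∀ k ∈ Finset.univ, ∫⁻ x, l k * g k x ∂Q' = l k := by
        intro k _
        rw [lintegral_const_mul _ (hgmeas k)]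
        have : ∫⁻ x, g k x ∂Q' = Q k Set.univ := by
          rw [← hg k, withDensity_apply _ MeasurableSet.univ, setLIntegral_univ]
        rw [this, (hQprob k).measure_univ, mul_one]
      rw [Finset.sum_congr rfl heach, hlsum]
      exact one_ne_top
    exact (ae_lt_top hhmeas hint).mono fun x hx => hx.ne
  have hQ0ac : Q0 ≪ Q' := hQ0h ▸ withDensity_absolutelyContinuous _ _
  have hpos : ∀ᵐ x ∂Q0, h x ≠ 0 := by
    rw [ae_iff]
    have hset : {x | ¬ h x ≠ 0} = {x | h x = 0} := by ext x; simp
    have hpre : {x | h x = 0} = h ⁻¹' {0} := rfl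
    rw [hset, hQ0h, hpre, withDensity_apply _ (hhmeas (measurableSet_singleton 0))]
    rw [setLIntegral_congr_fun (hhmeas (measurableSet_singleton 0))
      (g := fun _ => 0) (fun x hx => hx)]
    simp
  refine iSup_le fun k => ?_
  refine comap_le_of_ae_eq Q0 _ hGle (hfmeas k) ((hgG k).div hhG) ?_
  have keyQ0 : (fun x => h x * f k x) =ᵐ[Q0] g k := hQ0ac.ae_eq (key k)
  have hfinQ0 : ∀ᵐ x ∂Q0, h x ≠ ∞ := hQ0ac.ae_le hfin
  filter_upwards [keyQ0, hfinQ0, hpos] with x hx hxfin hxpos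
  rw [Pi.div_apply, ENNReal.eq_div_iff hxpos hxfin]
  exact hx
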